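/- Let U : ℕ → ℕ → ℝ satisfy U i j = 0 whenever j + 1 < i (almost upper triangular). Then for every y ∈ ℕ: det(Id − U_{[0,y]}) = det(Id − U_{[0,y−1]}) · (1 − U y y) − ∑_{x=0}^{y−1} det(Id − U_{[0,x−1]}) · U x y · ∏_{j=x+1}^{y} U j (j−1), with the convention det(Id − U_{[0,−1]}) = 1. -/

import Mathlib

/-- `detOneSub U n = det(Id − U_{[0,n−1]})`, with the convention that it equals `1`
when `n = 0` (i.e. `det(Id − U_{[0,−1]}) = 1`). -/
noncomputable def detOneSub (U : ℕ → ℕ → ℝ) (n : ℕ) : ℝ :=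
  Matrix.det (1 - Matrix.of fun i j : Fin n => U i.1 j.1)

lemma detOneSub_congr (U V : ℕ → ℕ → ℝ) (n : ℕ)
    (h : ∀ i j, i < n → j < n → U i j = V i j) : detOneSub U n = detOneSub V n := by
  unfold detOneSub
  congr 1
  ext i j
  simp [h i.1 j.1 i.2 j.2]

/-- Lemma 2.2: recursion for the determinants `det(Id − U_{[0,y]})` of an almost
upper triangular matrix `U`. -/
theorem detOneSub_recursion (U : ℕ → ℕ → ℝ)
    (hU : ∀ i j, j + 1 < i → U i j = 0) (y : ℕ) :
    detOneSub U (y + 1) =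
      detOneSub U y * (1 - U y y) -
        ∑ x ∈ Finset.range y,
          detOneSub U x * U x y * ∏ j ∈ Finset.Icc (x + 1) y, U j (j - 1) := by
  induction y generalizing U with
  | zero =>
      simp [detOneSub, Matrix.det_fin_one, Matrix.one_apply]
  | succ z ih =>
      -- the modified matrix whose determinant is the cofactor at (z+1, z)
      set V : ℕ → ℕ → ℝ := fun i j =>
        if z + 1 ≤ i then 0
        else if j = z then (if i = z then U i (z+1) + 1 else U i (z+1))
        else U i j with hVdef
      have hV : ∀ i j, j + 1 < i → V i j = 0 := by
        intro i j h
        by_cases hi : z + 1 ≤ i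
        · simp [hVdef, hi]
          intro hc; omega
        · push_neg at hi
          have hjz : j ≠ z := by omega
          simp [hVdef, hi, hjz, Nat.not_le.mpr hi, hU i j h]
      -- matrices agree below level z
      have hVU : ∀ x, x ≤ z → detOneSub V x = detOneSub U x := by
        intro x hx
        apply detOneSub_congr
        intro i j hi hj
        have h1 : ¬ z + 1 ≤ i := by omega
        have h2 : j ≠ z := by omega
        simp [hVdef, h1, h2]
        intro hc; omega
      have hVzz : V z z = U z (z+1) + 1 := by simp [hVdef]
      have hVxz : ∀ x, x < z → V x z = U x (z+1) := by
        intro x hx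
        simp [hVdef, Nat.not_le.mpr (by omega : x < z + 1), hx.ne]
        intro hc; omega
      have hVsub : ∀ j, j ∈ Finset.Icc 1 z → V j (j-1) = U j (j-1) := by
        intro j hj
        simp only [Finset.mem_Icc] at hj
        have h1 : ¬ z + 1 ≤ j := by omega
        have h2 : j - 1 ≠ z := by omega
        simp [hVdef, h1, h2]
        intro hc; omega
      -- the inductive hypothesis for V
      have hE := ih V hV
      rw [hVU z le_rfl, hVzz] at hE
      have hEsum : ∑ x ∈ Finset.range z,
          detOneSub V x * V x z * ∏ j ∈ Finset.Icc (x + 1) z, V j (j - 1)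
          = ∑ x ∈ Finset.range z,
          detOneSub U x * U x (z+1) * ∏ j ∈ Finset.Icc (x + 1) z, U j (j - 1) := by
        refine Finset.sum_congr rfl fun x hx => ?_
        rw [Finset.mem_range] at hx
        rw [hVU x hx.le, hVxz x hx]
        congr 1
        refine Finset.prod_congr rfl fun j hj => ?_
        rw [Finset.mem_Icc] at hj
        exact hVsub j (Finset.mem_Icc.mpr ⟨by omega, hj.2⟩)
      rw [hEsum] at hE
      -- Laplace expansion of det(1 - U_{[0,z+1]}) along the last row
      have hexp : detOneSub U (z + 1 + 1) =
          (1 - U (z+1) (z+1)) * detOneSub U (z+1) + U (z+1) z * detOneSub V (z+1) := by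
        set M : Matrix (Fin (z+2)) (Fin (z+2)) ℝ :=
          1 - Matrix.of fun i j : Fin (z+2) => U i.1 j.1 with hM
        have hMapply : ∀ i j : Fin (z+2), M i j = (if i = j then 1 else 0) - U i.1 j.1 := by
          intro i j
          simp [hM, Matrix.one_apply]
        rw [show detOneSub U (z+1+1) = M.det from rfl,
          Matrix.det_succ_row M (Fin.last (z+1))]
        rw [Fin.sum_univ_castSucc, Fin.sum_univ_castSucc]
        have h0 : ∑ j : Fin z, ((-1:ℝ) ^ ((Fin.last (z+1) : ℕ) + ((j.castSucc.castSucc : Fin (z+2)) : ℕ))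
            * M (Fin.last (z+1)) j.castSucc.castSucc
            * (M.submatrix (Fin.last (z+1)).succAbove j.castSucc.castSucc.succAbove).det) = 0 := by
          refine Finset.sum_eq_zero fun j _ => ?_
          have hz : M (Fin.last (z+1)) j.castSucc.castSucc = 0 := by
            rw [hMapply]
            have hne : Fin.last (z+1) ≠ j.castSucc.castSucc := by
              intro h
              have h2 := congrArg Fin.val h
              simp only [Fin.val_last, Fin.coe_castSucc] at h2
              omega
            rw [if_neg hne]
            simp only [Fin.val_last, Fin.coe_castSucc]
            rw [hU (z+1) j.1 (by have := j.2; omega)]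
            ring
          rw [hz]; ring
        rw [h0, zero_add]
        -- the two minors
        have hminor1 : (M.submatrix (Fin.last (z+1)).succAbove
            (Fin.last (z+1)).succAbove).det = detOneSub U (z+1) := by
          rw [Fin.succAbove_last]
          unfold detOneSub
          congr 1
          ext i j
          simp [hM, Matrix.one_apply, Fin.castSucc_inj, Fin.ext_iff]
        have hminor2 : (M.submatrix (Fin.last (z+1)).succAbove
            ((Fin.last z).castSucc : Fin (z+2)).succAbove).det = detOneSub V (z+1) := by
          rw [Fin.succAbove_last]
          unfold detOneSub
          congr 1
          ext i j
          rw [Matrix.submatrix_apply, hMapply]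
          rcases lt_or_eq_of_le (Nat.lt_succ_iff.mp j.2) with hj | hj
          · have hlt : j.castSucc < (Fin.last z).castSucc := by
              simp [Fin.lt_def, hj]
            rw [Fin.succAbove_of_castSucc_lt _ _ hlt]
            have h1 : ¬ z + 1 ≤ (i:ℕ) := by have := i.2; omega
            simp [hVdef, Matrix.one_apply, Fin.ext_iff, h1, hj.ne]
            intro hc; omega
          · have hge : (Fin.last z).castSucc ≤ j.castSucc := by
              simp [Fin.le_def, hj]
            rw [Fin.succAbove_of_le_castSucc _ _ hge]
            have h1 : ¬ z + 1 ≤ (i:ℕ) := by have := i.2; omega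
            have hsucc : ((j.succ : Fin (z+2)) : ℕ) = z + 1 := by simp [hj]
            have hne : i.castSucc ≠ j.succ := by
              intro h
              apply absurd (congrArg Fin.val h)
              have := i.2
              simp [hsucc]
              omega
            rw [if_neg hne, hsucc]
            by_cases hiz : (i:ℕ) = z
            · simp [hVdef, Matrix.one_apply, Fin.ext_iff, h1, hj, hiz]
              try ring
            · simp [hVdef, Matrix.one_apply, Fin.ext_iff, h1, hj, hiz]
              intro hc; omega
        have hentry1 : M (Fin.last (z+1)) (Fin.last (z+1)) = 1 - U (z+1) (z+1) := by
          rw [hMapply]; simp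
        have hentry2 : M (Fin.last (z+1)) ((Fin.last z).castSucc) = - U (z+1) z := by
          rw [hMapply]
          rw [if_neg (by intro h; apply absurd (congrArg Fin.val h); simp)]
          simp
        rw [hminor1, hentry1, hentry2]
        have : (M.submatrix (Fin.last (z+1)).succAbove
            ((Fin.last z).castSucc.succAbove)).det = detOneSub V (z+1) := hminor2
        rw [show ((Fin.last z).castSucc : Fin (z+2)) = (Fin.last z).castSucc from rfl] at this
        rw [this]
        have hs1 : ((Fin.last (z+1) : Fin (z+2)) : ℕ) = z + 1 := rfl
        have hs2 : (((Fin.last z).castSucc : Fin (z+2)) : ℕ) = z := rfl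
        rw [hs1, hs2]
        have hpow1 : (-1:ℝ) ^ (z + 1 + z) = -1 := by
          have : z + 1 + z = 2 * z + 1 := by ring
          rw [this, pow_succ, pow_mul]
          simp
        have hpow2 : (-1:ℝ) ^ (z + 1 + (z + 1)) = 1 := by
          have : z + 1 + (z + 1) = 2 * (z + 1) := by ring
          rw [this, pow_mul]
          simp
        rw [hpow1, hpow2]
        ring
      -- put everything together
      rw [hexp, hE]
      rw [Finset.sum_range_succ]
      have hlast : detOneSub U z * U z (z+1) * ∏ j ∈ Finset.Icc (z + 1) (z+1), U j (j - 1)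
          = detOneSub U z * U z (z+1) * U (z+1) z := by
        rw [Finset.Icc_self, Finset.prod_singleton]
        norm_num
      rw [hlast]
      have hprod : ∀ x, x ∈ Finset.range z →
          detOneSub U x * U x (z+1) * ∏ j ∈ Finset.Icc (x + 1) (z+1), U j (j - 1)
          = (detOneSub U x * U x (z+1) * ∏ j ∈ Finset.Icc (x + 1) z, U j (j - 1)) * U (z+1) z := by
        intro x hx
        rw [Finset.mem_range] at hx
        rw [Finset.prod_Icc_succ_top (by omega : x + 1 ≤ z + 1)]
        norm_num [mul_assoc]
      rw [Finset.sum_congr rfl hprod, ← Finset.sum_mul]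
      ring
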